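/- Let g, h be monomials with disjoint support in ℚ[x_1,...,x_k], at least one non-constant, and let a, b ≥ 1 with v_2(a) = v_2(b) (equal 2-adic valuations). Set l = v_2(a) and let c = gcd(a,b)/2^l. Then g^{2^l·c} + h^{2^l·c} divides both g^a + h^a and g^b + h^b in ℚ[x_1,...,x_k]. -/
import Mathlib

theorem stmt16 {k : ℕ}
    (u v : Fin k → ℕ) (a b : ℚ) (ha : a ≠ 0) (hb : b ≠ 0)
    (hdisj : ∀ i, u i = 0 ∨ v i = 0) (hnc : u ≠ 0 ∨ v ≠ 0)
    (g h : MvPolynomial (Fin k) ℚ)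
    (hg : g = MvPolynomial.C a * ∏ i, MvPolynomial.X i ^ u i)
    (hh : h = MvPolynomial.C b * ∏ i, MvPolynomial.X i ^ v i)
    (m n : ℕ) (hm : 1 ≤ m) (hn : 1 ≤ n)
    (h2 : padicValNat 2 m = padicValNat 2 n) :
    (g ^ (2 ^ padicValNat 2 m * (Nat.gcd m n / 2 ^ padicValNat 2 m)) +
        h ^ (2 ^ padicValNat 2 m * (Nat.gcd m n / 2 ^ padicValNat 2 m))) ∣ g ^ m + h ^ m ∧
    (g ^ (2 ^ padicValNat 2 m * (Nat.gcd m n / 2 ^ padicValNat 2 m)) +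
        h ^ (2 ^ padicValNat 2 m * (Nat.gcd m n / 2 ^ padicValNat 2 m))) ∣ g ^ n + h ^ n := by
  set l := padicValNat 2 m with hl
  set d := Nat.gcd m n with hd
  have hm0 : m ≠ 0 := by omega
  have hn0 : n ≠ 0 := by omega
  have hdvdm : 2 ^ l ∣ m := pow_padicValNat_dvd
  have hdvdn : 2 ^ l ∣ n := h2 ▸ pow_padicValNat_dvd
  have hdvdd : 2 ^ l ∣ d := Nat.dvd_gcd hdvdm hdvdn
  have hcancel : 2 ^ l * (d / 2 ^ l) = d := Nat.mul_div_cancel' hdvdd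
  rw [hcancel]
  have hd0 : d ≠ 0 := Nat.gcd_ne_zero_left hm0
  haveI : Fact (Nat.Prime 2) := ⟨Nat.prime_two⟩
  constructor
  · have hdm : d ∣ m := Nat.gcd_dvd_left m n
    have hodd : Odd (m / d) := by
      rcases Nat.even_or_odd (m / d) with he | ho
      · exfalso
        obtain ⟨e, he'⟩ := he
        have : 2 ^ (l + 1) ∣ m := by
          have : m = d * (m / d) := (Nat.div_mul_cancel hdm).symm ▸ (Nat.mul_div_cancel' hdm).symm
          rw [this, he']
          obtain ⟨c, hc⟩ := hdvdd
          exact ⟨c * e, by rw [hc]; ring⟩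
        have := (padicValNat_dvd_iff_le (p := 2) hm0 (n := l+1)).mp this
        omega
      · exact ho
    have := Odd.add_dvd_pow_add_pow (g ^ d) (h ^ d) hodd
    rwa [← pow_mul, ← pow_mul, Nat.mul_div_cancel' hdm] at this
  · have hdn : d ∣ n := Nat.gcd_dvd_right m n
    have hodd : Odd (n / d) := by
      rcases Nat.even_or_odd (n / d) with he | ho
      · exfalso
        obtain ⟨e, he'⟩ := he
        have : 2 ^ (l + 1) ∣ n := by
          have : n = d * (n / d) := (Nat.mul_div_cancel' hdn).symm
          rw [this, he']
          obtain ⟨c, hc⟩ := hdvdd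
          exact ⟨c * e, by rw [hc]; ring⟩
        have := (padicValNat_dvd_iff_le (p := 2) hn0 (n := l+1)).mp this
        omega
      · exact ho
    have := Odd.add_dvd_pow_add_pow (g ^ d) (h ^ d) hodd
    rwa [← pow_mul, ← pow_mul, Nat.mul_div_cancel' hdn] at this
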